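/- Let c₂ : [−√2, √2] → ℝ² be defined by c₂(t) = (t/√2, 1 − |t|/√2), and let q = (x₀, y₀) ∈ ℝ² with x₀² + y₀² ≤ 1. Then the function t ↦ t²/2 − ‖q − c₂(t)‖²/2 is convex on [−√2, √2]. -/

import Mathlib

/-- For the bouncing curve `c₂(t) = (t/√2, 1 − |t|/√2)` and `q = (x₀, y₀)` with
`x₀² + y₀² ≤ 1`, the function `t ↦ t²/2 − ‖q − c₂(t)‖²/2` is convex on `[−√2, √2]`. -/
theorem stmt_13 (q : EuclideanSpace ℝ (Fin 2)) (hq : q 0 ^ 2 + q 1 ^ 2 ≤ 1)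
    (c₂ : ℝ → EuclideanSpace ℝ (Fin 2))
    (hc : ∀ t, c₂ t =
      (WithLp.toLp 2 ![t / Real.sqrt 2, 1 - |t| / Real.sqrt 2] : EuclideanSpace ℝ (Fin 2))) :
    ConvexOn ℝ (Set.Icc (-Real.sqrt 2) (Real.sqrt 2))
      (fun t : ℝ => t ^ 2 / 2 - ‖q - c₂ t‖ ^ 2 / 2) := by
  have hs2 : (0:ℝ) < Real.sqrt 2 := by positivity
  set a : ℝ := q 0 with ha
  set b : ℝ := q 1 with hb
  have key : ∀ t : ℝ, t ^ 2 / 2 - ‖q - c₂ t‖ ^ 2 / 2 =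
      (1 - b) / Real.sqrt 2 * |t| + (a / Real.sqrt 2 * t - (a ^ 2 + (b - 1) ^ 2) / 2) := by
    intro t
    have h1 : ‖q - c₂ t‖ ^ 2 = (a - t / Real.sqrt 2) ^ 2
        + (b - (1 - |t| / Real.sqrt 2)) ^ 2 := by
      rw [hc, EuclideanSpace.norm_eq, Real.sq_sqrt (by positivity)]
      simp [Fin.sum_univ_two, sq_abs, ha, hb]
    rw [h1]
    have habs : |t| ^ 2 = t ^ 2 := sq_abs t
    have h2 : Real.sqrt 2 ^ 2 = 2 := Real.sq_sqrt (by norm_num)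
    field_simp
    nlinarith [habs, h2, sq_nonneg t]
  have hbl : b ≤ 1 := by nlinarith [sq_nonneg a, sq_nonneg (b - 1)]
  have hcn : (0:ℝ) ≤ (1 - b) / Real.sqrt 2 := div_nonneg (by linarith) hs2.le
  refine ⟨convex_Icc _ _, fun x hx y hy α β hα hβ hαβ => ?_⟩
  simp only [smul_eq_mul, key]
  have htri : |α * x + β * y| ≤ α * |x| + β * |y| := by
    calc |α * x + β * y| ≤ |α * x| + |β * y| := abs_add_le _ _
    _ = α * |x| + β * |y| := by rw [abs_mul, abs_mul, abs_of_nonneg hα, abs_of_nonneg hβ]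
  have := mul_le_mul_of_nonneg_left htri hcn
  nlinarith [this]
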